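/- Let α = [0;2,\overline{r}] with r ≥ 1, and let k, m ∈ ℕ be such that k = q_{m+1} − p with 2 ≤ p ≤ q_{m+1} − q_m + 1. Then (σ^m)_k(c_α) = u⁻¹ v_{m−1} ∏_{j=m}^{∞} v_j, where u is the prefix of v_{m−1} of length |u| = q_{m+1} − q_m + 1 − p. -/

import Mathlib

/-- The two-letter alphabet 𝒜 = {a, b}. -/
inductive AB : Type
  | a : AB
  | b : AB
deriving DecidableEq, Repr

/-- Apply a morphism (determined by its images on the letters) to a finite word. -/
def applyM (g : AB → List AB) (w : List AB) : List AB := w.flatMap g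

/-- The exchange morphism E : a ↦ b, b ↦ a. -/
def Em : AB → List AB
  | AB.a => [AB.b]
  | AB.b => [AB.a]

/-- The morphism φ : a ↦ ab, b ↦ a. -/
def phim : AB → List AB
  | AB.a => [AB.a, AB.b]
  | AB.b => [AB.a]

/-- Composition of morphisms: `compM g h` applies `h` first, then `g`. -/
def compM (g h : AB → List AB) : AB → List AB := fun c => applyM g (h c)

/-- Powers of a morphism. -/
def mpow (g : AB → List AB) : ℕ → AB → List AB
  | 0 => fun c => [c]
  | n + 1 => compM g (mpow g n)

/-- A morphism is standard iff it is a composition of E and φ (in any number and order). -/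
inductive IsStandard : (AB → List AB) → Prop
  | id : IsStandard (fun c => [c])
  | compE {ψ : AB → List AB} : IsStandard ψ → IsStandard (compM ψ Em)
  | compPhi {ψ : AB → List AB} : IsStandard ψ → IsStandard (compM ψ phim)

/-- `IsRightConj ψ ξ k` : ξ is the k-th right conjugate of ψ, i.e. there is a word u
of length k with ψ(w)u = uξ(w) for all finite words w. -/
def IsRightConj (ψ ξ : AB → List AB) (k : ℕ) : Prop :=
  ∃ u : List AB, u.length = k ∧ ∀ w : List AB, applyM ψ w ++ u = u ++ applyM ξ w

/-- w^k (power of a finite word under concatenation). -/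
def lpow (w : List AB) : ℕ → List AB
  | 0 => []
  | k + 1 => w ++ lpow w k

/-- Standard sequence associated with a directive sequence (d₁, d₂, …) (here `d`
is indexed so that `d i` is dᵢ for i ≥ 1): `sseq d 0 = s₋₁ = b`, `sseq d (n+1) = sₙ`,
with s₀ = a and sₙ = sₙ₋₁^{dₙ} sₙ₋₂. -/
def sseq (d : ℕ → ℕ) : ℕ → List AB
  | 0 => [AB.b]
  | 1 => [AB.a]
  | n + 2 => lpow (sseq d (n + 1)) (d (n + 1)) ++ sseq d n

/-- Convergent denominators: `qseq d n` = qₙ = |sₙ| (q₀ = 1, q₁ = 1 + d₁,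
qₙ = dₙqₙ₋₁ + qₙ₋₂). -/
def qseq (d : ℕ → ℕ) : ℕ → ℕ
  | 0 => 1
  | 1 => 1 + d 1
  | n + 2 => d (n + 2) * qseq d (n + 1) + qseq d n

/-- `PrefInf u x` : the finite word u is a prefix of the infinite word x. -/
def PrefInf (u : List AB) (x : ℕ → AB) : Prop :=
  ∀ i, i < u.length → u.getD i AB.a = x i

/-- Image of an infinite word under a (non-erasing) morphism, letter by letter. -/
def applyInf (g : AB → List AB) (x : ℕ → AB) : ℕ → AB :=
  fun i => (applyM g ((List.range (i + 1)).map x)).getD i AB.a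

/-- `IsProdInf u x` : the infinite word x is the infinite product u 0 · u 1 · u 2 ⋯,
i.e. every finite partial product is a prefix of x. -/
def IsProdInf (u : ℕ → List AB) (x : ℕ → AB) : Prop :=
  ∀ n, PrefInf (((List.range n).map u).flatten) x

/-- Adjoining singular words: `vword d k` is the adjoining singular word v_{k-1}
(so `vword d 0 = v₋₁`), where vₙ = a·sₙ₊₁^{d_{n+2}−1}sₙ·b⁻¹ for n odd and
vₙ = b·sₙ₊₁^{d_{n+2}−1}sₙ·a⁻¹ for n even. -/
def vword (d : ℕ → ℕ) (k : ℕ) : List AB :=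
  (if k % 2 = 0 then AB.a else AB.b) ::
    (lpow (sseq d (k + 1)) (d (k + 1) - 1) ++ sseq d k).dropLast

/-- Singular words: `wword d k` is the singular word w_{k-2}
(w₋₂ = ε, w₋₁ = a, w₀ = b, and wₙ = a·sₙ·b⁻¹ for n ≥ 1 odd, wₙ = b·sₙ·a⁻¹ for n even). -/
def wword (d : ℕ → ℕ) : ℕ → List AB
  | 0 => []
  | 1 => [AB.a]
  | 2 => [AB.b]
  | k + 3 =>
      (if (k + 1) % 2 = 1 then AB.a else AB.b) :: (sseq d (k + 2)).dropLast

/-- The standard morphism σ associated with a type (i) Sturm number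
α = [0;1+d₁,\overline{d₂,…,dₙ}] : σ(a) = sₙ₋₁, σ(b) = sₙ₋₁^{dₙ−d₁} sₙ₋₂. -/
def sigmaGen (d : ℕ → ℕ) (n : ℕ) : AB → List AB
  | AB.a => sseq d n
  | AB.b => lpow (sseq d n) (d n - d 1) ++ sseq d (n - 1)

/-- The directive sequence of α = [0;2,\overline{r}] : d₁ = 1, dᵢ = r for i ≥ 2. -/
def dseq (r : ℕ) : ℕ → ℕ := fun i => if i ≤ 1 then 1 else r

/-- The directive sequence of 1 − α = [0;1,d₁,\overline{d₂,…,dₙ}] obtained from that of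
α = [0;1+d₁,\overline{d₂,…,dₙ}] : ê₁ = 0 and êᵢ = dᵢ₋₁ for i ≥ 2. -/
def dhat (d : ℕ → ℕ) : ℕ → ℕ := fun i => if i ≤ 1 then 0 else d (i - 1)

/-- `Generates ψ c x` : ψ is prolongable on the letter c and x = ψ^ω(c), i.e. every
ψ^m(c) is a prefix of x. -/
def Generates (ψ : AB → List AB) (c : AB) (x : ℕ → AB) : Prop :=
  (∃ w : List AB, w ≠ [] ∧ ψ c = c :: w) ∧ ∀ m, PrefInf (mpow ψ m c) x

/-- Fibonacci numbers, shifted: `fibw k = F_{k-1}`, so fibw 0 = F₋₁ = 1,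
fibw 1 = F₀ = 1, Fₙ = Fₙ₋₁ + Fₙ₋₂. -/
def fibw : ℕ → ℕ
  | 0 => 1
  | 1 => 1
  | n + 2 => fibw (n + 1) + fibw n

/-- `HasCF γ a` : γ has continued fraction expansion [0; a 1, a 2, a 3, …]. -/
def HasCF (γ : ℝ) (a : ℕ → ℕ) : Prop :=
  ∃ x : ℕ → ℝ, x 0 = γ ∧ (∀ i, 0 < x i ∧ x i < 1) ∧
    ∀ i, 1 / x i = (a (i + 1) : ℝ) + x (i + 1)

/-- γ has a continued fraction expansion of type (i):
γ = [0;1+d₁,\overline{d₂,…,dₙ}] < 1/2 with dₙ ≥ d₁ ≥ 1. -/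
def CFTypeI (γ : ℝ) : Prop :=
  ∃ a : ℕ → ℕ, HasCF γ a ∧ γ < 1 / 2 ∧
    ∃ n : ℕ, 2 ≤ n ∧ ∃ d : ℕ → ℕ,
      (∀ i, 1 ≤ i → 1 ≤ d i) ∧ a 1 = 1 + d 1 ∧ (∀ i, 2 ≤ i → a i = d i) ∧
      (∀ i, 2 ≤ i → d (i + (n - 1)) = d i) ∧ d 1 ≤ d n

/-- γ has a continued fraction expansion of type (ii):
γ = [0;1,d₁,\overline{d₂,…,dₙ}] > 1/2 with dₙ ≥ d₁. -/
def CFTypeII (γ : ℝ) : Prop :=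
  ∃ a : ℕ → ℕ, HasCF γ a ∧ 1 / 2 < γ ∧
    ∃ n : ℕ, 2 ≤ n ∧ ∃ d : ℕ → ℕ,
      (∀ i, 1 ≤ i → 1 ≤ d i) ∧ a 1 = 1 ∧ (∀ i, 2 ≤ i → a i = d (i - 1)) ∧
      (∀ i, 2 ≤ i → d (i + (n - 1)) = d i) ∧ d 1 ≤ d n

/-- A Sturm number: an irrational γ ∈ (0,1) whose continued fraction expansion is of
type (i) or type (ii). -/
def IsSturmNumber (γ : ℝ) : Prop :=
  Irrational γ ∧ 0 < γ ∧ γ < 1 ∧ (CFTypeI γ ∨ CFTypeII γ)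



lemma lpow_succ (w : List AB) (k : ℕ) : lpow w (k+1) = w ++ lpow w k := rfl

lemma length_lpow (w : List AB) (k : ℕ) : (lpow w k).length = k * w.length := by
  induction k with
  | zero => simp [lpow]
  | succ k ih => simp [lpow, ih]; ring

lemma applyM_append (g : AB → List AB) (u v : List AB) :
    applyM g (u ++ v) = applyM g u ++ applyM g v := List.flatMap_append ..

lemma applyM_lpow (g : AB → List AB) (w : List AB) (k : ℕ) :
    applyM g (lpow w k) = lpow (applyM g w) k := by
  induction k with
  | zero => simp [lpow, applyM]
  | succ k ih => rw [lpow_succ, applyM_append, ih, lpow_succ]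

lemma applyM_id (w : List AB) : applyM (fun c => [c]) w = w := by
  simp [applyM]

lemma applyM_comp (g h : AB → List AB) (w : List AB) :
    applyM (compM g h) w = applyM g (applyM h w) := by
  simp only [applyM, List.flatMap_assoc]
  rfl

lemma sseq_ne_nil (d : ℕ → ℕ) : ∀ n, sseq d n ≠ []
  | 0 => by simp [sseq]
  | 1 => by simp [sseq]
  | n + 2 => by
      have := sseq_ne_nil d n
      simp only [sseq]
      intro h
      exact this (List.append_eq_nil_iff.mp h).2

lemma length_sseq (d : ℕ → ℕ) : ∀ n, (sseq d (n+1)).length = qseq d n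
  | 0 => by simp [sseq, qseq]
  | 1 => by simp [sseq, qseq, length_lpow]; omega
  | n + 2 => by
      show (lpow (sseq d (n+2)) (d (n+2)) ++ sseq d (n+1)).length = qseq d (n+2)
      rw [List.length_append, length_lpow, length_sseq d (n+1), length_sseq d n]
      rfl

lemma dseq_one (r : ℕ) : dseq r 1 = 1 := rfl

lemma dseq_ge_two (r n : ℕ) (h : 2 ≤ n) : dseq r n = r := by
  simp [dseq]; omega

lemma qseq_ge (r : ℕ) (hr : 1 ≤ r) : ∀ n, n + 1 ≤ qseq (dseq r) n
  | 0 => by simp [qseq]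
  | 1 => by simp [qseq, dseq]
  | n + 2 => by
      have h1 := qseq_ge r hr (n+1)
      have h2 := qseq_ge r hr n
      show n + 3 ≤ dseq r (n+2) * qseq (dseq r) (n+1) + qseq (dseq r) n
      rw [dseq_ge_two r (n+2) (by omega)]
      nlinarith

lemma qseq_mono_succ (r : ℕ) (hr : 1 ≤ r) : ∀ n, qseq (dseq r) n ≤ qseq (dseq r) (n+1)
  | 0 => by simp [qseq, dseq]
  | n + 1 => by
      show qseq (dseq r) (n+1) ≤ dseq r (n+2) * qseq (dseq r) (n+1) + qseq (dseq r) n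
      rw [dseq_ge_two r (n+2) (by omega)]
      nlinarith [qseq_ge r hr (n+1), qseq_ge r hr n]

lemma qseq_mono (r : ℕ) (hr : 1 ≤ r) (i j : ℕ) (h : i ≤ j) :
    qseq (dseq r) i ≤ qseq (dseq r) j := by
  induction j with
  | zero => simp_all
  | succ j ih =>
      rcases Nat.lt_or_ge i (j+1) with h' | h'
      · exact le_trans (ih (by omega)) (qseq_mono_succ r hr j)
      · have : i = j + 1 := by omega
        simp [this]

lemma sigma_sseq (r : ℕ) (hr : 1 ≤ r) :
    ∀ n, applyM (sigmaGen (dseq r) 2) (sseq (dseq r) (n+1)) = sseq (dseq r) (n+2)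
  | 0 => by
      show sigmaGen (dseq r) 2 AB.a ++ [] = sseq (dseq r) 2
      simp [sigmaGen]
  | 1 => by
      have h2 : sseq (dseq r) 2 = [AB.a, AB.b] := by
        show lpow (sseq (dseq r) 1) (dseq r 1) ++ sseq (dseq r) 0 = _
        simp [sseq, lpow, dseq]
      show applyM (sigmaGen (dseq r) 2) (sseq (dseq r) 2) = sseq (dseq r) 3
      rw [h2]
      show sigmaGen (dseq r) 2 AB.a ++ (sigmaGen (dseq r) 2 AB.b ++ []) = _
      show sseq (dseq r) 2 ++ ((lpow (sseq (dseq r) 2) (dseq r 2 - dseq r 1) ++ sseq (dseq r) 1) ++ []) = _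
      show _ = lpow (sseq (dseq r) 2) (dseq r 2) ++ sseq (dseq r) 1
      have hd2 : dseq r 2 = r := dseq_ge_two r 2 (by omega)
      have hd1 : dseq r 1 = 1 := rfl
      rw [hd1, hd2, List.append_nil, show r = (r - 1) + 1 from by omega, lpow_succ]
      simp
  | n + 2 => by
      show applyM (sigmaGen (dseq r) 2)
          (lpow (sseq (dseq r) (n+2)) (dseq r (n+2)) ++ sseq (dseq r) (n+1)) = sseq (dseq r) (n+4)
      rw [applyM_append, applyM_lpow, sigma_sseq r hr (n+1), sigma_sseq r hr n]
      show _ = lpow (sseq (dseq r) (n+3)) (dseq r (n+3)) ++ sseq (dseq r) (n+2)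
      rw [dseq_ge_two r (n+2) (by omega), dseq_ge_two r (n+3) (by omega)]

lemma mpow_sseq (r : ℕ) (hr : 1 ≤ r) (m n : ℕ) :
    applyM (mpow (sigmaGen (dseq r) 2) m) (sseq (dseq r) (n+1)) = sseq (dseq r) (n+1+m) := by
  induction m with
  | zero => exact applyM_id _
  | succ m ih =>
      show applyM (compM (sigmaGen (dseq r) 2) (mpow (sigmaGen (dseq r) 2) m)) _ = _
      rw [applyM_comp, ih]
      have := sigma_sseq r hr (n + m)
      rw [show n+1+m = n+m+1 from by omega, this, show n+1+(m+1) = n+m+2 from by omega]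

lemma sseq_getLast? (r : ℕ) :
    ∀ n, (sseq (dseq r) (n+1)).getLast? = some (if n % 2 = 0 then AB.a else AB.b)
  | 0 => by simp [sseq]
  | 1 => by
      show (lpow (sseq (dseq r) 1) (dseq r 1) ++ sseq (dseq r) 0).getLast? = _
      simp [sseq, lpow, dseq]
  | n + 2 => by
      show (lpow (sseq (dseq r) (n+2)) (dseq r (n+2)) ++ sseq (dseq r) (n+1)).getLast? = _
      rw [List.getLast?_append_of_ne_nil _ (sseq_ne_nil _ _), sseq_getLast? r n]
      have : (n + 2) % 2 = n % 2 := by omega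
      rw [this]

lemma sseq_split_last (r : ℕ) (n : ℕ) :
    sseq (dseq r) (n+1) = (sseq (dseq r) (n+1)).dropLast ++ [if n % 2 = 0 then AB.a else AB.b] := by
  have hne := sseq_ne_nil (dseq r) (n+1)
  have h1 := sseq_getLast? r n
  rw [List.getLast?_eq_getLast hne] at h1
  have h2 : (sseq (dseq r) (n+1)).getLast hne = (if n % 2 = 0 then AB.a else AB.b) := by
    exact Option.some_injective _ h1
  rw [← h2]
  exact (List.dropLast_append_getLast hne).symm

lemma dseq_pos (r : ℕ) (hr : 1 ≤ r) (n : ℕ) : 1 ≤ dseq r n := by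
  simp only [dseq]; split <;> omega

lemma dropLast_step (r : ℕ) (hr : 1 ≤ r) (N : ℕ) :
    (sseq (dseq r) (N+2)).dropLast = (sseq (dseq r) (N+1)).dropLast ++ vword (dseq r) N := by
  have hB : lpow (sseq (dseq r) (N+1)) (dseq r (N+1) - 1) ++ sseq (dseq r) N ≠ [] := by
    intro h
    exact sseq_ne_nil (dseq r) N (List.append_eq_nil_iff.mp h).2
  have h1 : sseq (dseq r) (N+2)
      = sseq (dseq r) (N+1) ++ (lpow (sseq (dseq r) (N+1)) (dseq r (N+1) - 1) ++ sseq (dseq r) N) := by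
    show lpow (sseq (dseq r) (N+1)) (dseq r (N+1)) ++ sseq (dseq r) N = _
    rw [show dseq r (N+1) = (dseq r (N+1) - 1) + 1 from by have := dseq_pos r hr (N+1); omega,
        lpow_succ, List.append_assoc]
    rw [show (dseq r (N+1) - 1 + 1 - 1) = dseq r (N+1) - 1 from by omega]
  rw [h1, List.dropLast_append_of_ne_nil hB]
  show _ = _ ++ ((if N % 2 = 0 then AB.a else AB.b) ::
      (lpow (sseq (dseq r) (N + 1)) (dseq r (N + 1) - 1) ++ sseq (dseq r) N).dropLast)
  conv_rhs => rw [show ∀ (l : List AB) (ch : AB) (x : List AB), l ++ (ch :: x) = (l ++ [ch]) ++ x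
    from by intros; simp]
  rw [← sseq_split_last r N]

lemma flatten_vword (r : ℕ) (hr : 1 ≤ r) :
    ∀ N, ((List.range N).map (vword (dseq r))).flatten = (sseq (dseq r) (N+1)).dropLast
  | 0 => by simp [sseq]
  | N + 1 => by
      rw [List.range_succ, List.map_append, List.flatten_append, flatten_vword r hr N]
      simp [dropLast_step r hr N]

lemma length_vword (r : ℕ) (hr : 1 ≤ r) (n : ℕ) :
    (vword (dseq r) n).length = qseq (dseq r) (n+1) - qseq (dseq r) n := by
  have h := congrArg List.length (dropLast_step r hr n)
  rw [List.length_append, List.length_dropLast, List.length_dropLast,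
      length_sseq, length_sseq] at h
  have h1 := qseq_ge r hr n
  have h2 := qseq_mono_succ r hr n
  omega

lemma getD_drop' (l : List AB) (k i : ℕ) (h : k + i < l.length) :
    (l.drop k).getD i AB.a = l.getD (k+i) AB.a := by
  rw [List.getD_eq_getElem _ _ (by simp; omega), List.getD_eq_getElem _ _ h]
  rw [List.getElem_drop]

lemma getD_dropLast (l : List AB) (i : ℕ) (h : i < l.dropLast.length) :
    l.dropLast.getD i AB.a = l.getD i AB.a := by
  rw [List.getD_eq_getElem _ _ h, List.getD_eq_getElem _ _ (by simp at h ⊢; omega)]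
  rw [List.getElem_dropLast]

lemma length_applyM_ge (g : AB → List AB) (hg : ∀ ch, g ch ≠ []) (w : List AB) :
    w.length ≤ (applyM g w).length := by
  induction w with
  | nil => simp [applyM]
  | cons ch w ih =>
      have h1 : 1 ≤ (g ch).length := by
        cases h : g ch with
        | nil => exact absurd h (hg ch)
        | cons _ _ => simp
      simp only [applyM, List.flatMap_cons, List.length_append, List.length_cons]
      simp only [applyM] at ih
      omega

lemma mpow_ne_nil (r : ℕ) (m : ℕ) (ch : AB) : mpow (sigmaGen (dseq r) 2) m ch ≠ [] := by
  induction m with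
  | zero => simp [mpow]
  | succ m ih =>
      show applyM (sigmaGen (dseq r) 2) (mpow (sigmaGen (dseq r) 2) m ch) ≠ []
      intro h
      have hlen := congrArg List.length h
      have hge := length_applyM_ge (sigmaGen (dseq r) 2)
        (by intro c2
            cases c2
            · exact sseq_ne_nil _ 2
            · show lpow _ _ ++ sseq (dseq r) 1 ≠ []
              intro h
              exact sseq_ne_nil _ 1 (List.append_eq_nil_iff.mp h).2)
        (mpow (sigmaGen (dseq r) 2) m ch)
      simp at hlen
      rw [hlen] at hge
      simp at hge
      exact ih hge

lemma shift_lemma (r : ℕ) (hr : 1 ≤ r) (c : ℕ → AB)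
    (hc : ∀ k, PrefInf (sseq (dseq r) (k + 1)) c)
    (m k : ℕ) (ξ : AB → List AB)
    (hξ : IsRightConj (mpow (sigmaGen (dseq r) 2) m) ξ k) (i : ℕ) :
    applyInf ξ c i = c (k + i) := by
  obtain ⟨u, hu, hconj⟩ := hξ
  set ψ := mpow (sigmaGen (dseq r) 2) m with hψ
  have hqN : k + i + 1 ≤ qseq (dseq r) (k + i) := qseq_ge r hr (k + i)
  set W := sseq (dseq r) (k + i + 1) with hWdef
  have hWlen : W.length = qseq (dseq r) (k + i) := length_sseq _ _
  set w := (List.range (i+1)).map c with hwdef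
  have hwlen : w.length = i + 1 := by simp [hwdef]
  have htake : W.take (i+1) = w := by
    apply List.ext_getElem
    · rw [List.length_take, hwlen, hWlen]; omega
    · intro j h1 h2
      have hj : j < i + 1 := by simpa [hwlen] using h2
      have hjW : j < W.length := by omega
      have h3 := hc (k + i) j (by rw [← hWdef]; omega)
      rw [List.getD_eq_getElem _ _ hjW] at h3
      simp only [List.getElem_take, hwdef, List.getElem_map, List.getElem_range]
      exact h3
  have hsplit : W = w ++ W.drop (i+1) := by rw [← htake, List.take_append_drop]
  have hne : ∀ ch, ψ ch ≠ [] := fun ch => mpow_ne_nil r m ch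
  have hlen_pw : (applyM ξ w).length = (applyM ψ w).length := by
    have := congrArg List.length (hconj w)
    simp only [List.length_append] at this
    omega
  have hgew : i + 1 ≤ (applyM ψ w).length := by
    have := length_applyM_ge ψ hne w
    omega
  have hiξ : i < (applyM ξ w).length := by omega
  have hpsiW : applyM ψ W = sseq (dseq r) (k + i + 1 + m) := mpow_sseq r hr m (k + i)
  have hlenpsiW : (applyM ψ W).length = qseq (dseq r) (k + i + m) := by
    rw [hpsiW, show k + i + 1 + m = (k + i + m) + 1 from by omega]
    exact length_sseq _ _
  have hki : k + i < (applyM ψ W).length := by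
    have := qseq_mono r hr (k + i) (k + i + m) (by omega)
    omega
  calc applyInf ξ c i
      = (applyM ξ w).getD i AB.a := rfl
    _ = (applyM ξ W).getD i AB.a := by
        conv_rhs => rw [hsplit]
        rw [applyM_append, List.getD_append _ _ _ _ hiξ]
    _ = (u ++ applyM ξ W).getD (k + i) AB.a := by
        rw [List.getD_append_right _ _ _ _ (by omega), hu]
        congr 1
        omega
    _ = (applyM ψ W ++ u).getD (k + i) AB.a := by rw [hconj W]
    _ = (applyM ψ W).getD (k + i) AB.a := List.getD_append _ _ _ _ hki
    _ = c (k + i) := by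
        rw [hpsiW]
        have := hc (k + i + m) (k + i)
          (by rw [show k+i+m+1 = k+i+1+m from by omega, ← hpsiW]; omega)
        rw [show k + i + m + 1 = k + i + 1 + m from by omega] at this
        exact this

/-- For α = [0;2,\overline{r}] (r ≥ 1): if k = q_{m+1} − p with
2 ≤ p ≤ q_{m+1} − q_m + 1, then (σ^m)_k(c_α) = u⁻¹ v_{m−1} ∏_{j=m}^∞ v_j, where
u is the prefix of v_{m−1} of length q_{m+1} − q_m + 1 − p
(so u⁻¹v_{m−1} is v_{m−1} with its first q_{m+1} − q_m + 1 − p letters removed). -/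
theorem statement2 (r : ℕ) (hr : 1 ≤ r)
    (c : ℕ → AB) (hc : ∀ k, PrefInf (sseq (dseq r) (k + 1)) c)
    (k m p : ℕ) (hp2 : 2 ≤ p)
    (hp : p ≤ qseq (dseq r) (m + 1) - qseq (dseq r) m + 1)
    (hk : k = qseq (dseq r) (m + 1) - p)
    (ξ : AB → List AB) (hξ : IsRightConj (mpow (sigmaGen (dseq r) 2) m) ξ k) :
    IsProdInf
      (fun t =>
        if t = 0 then
          (vword (dseq r) m).drop (qseq (dseq r) (m + 1) - qseq (dseq r) m + 1 - p)
        else vword (dseq r) (m + t))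
      (applyInf ξ c) := by
  intro n
  cases n with
  | zero => intro i hi; simp at hi
  | succ n =>
    set f : ℕ → List AB := (fun t =>
        if t = 0 then
          (vword (dseq r) m).drop (qseq (dseq r) (m + 1) - qseq (dseq r) m + 1 - p)
        else vword (dseq r) (m + t)) with hf
    set ℓ := qseq (dseq r) (m + 1) - qseq (dseq r) m + 1 - p with hℓ
    have hq1 : qseq (dseq r) m ≤ qseq (dseq r) (m+1) := qseq_mono_succ r hr m
    have hq0 : m + 1 ≤ qseq (dseq r) m := qseq_ge r hr m
    have hlv : (vword (dseq r) m).length = qseq (dseq r) (m+1) - qseq (dseq r) m := length_vword r hr m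
    have hla : ((sseq (dseq r) (m+1)).dropLast).length = qseq (dseq r) m - 1 := by
      rw [List.length_dropLast, length_sseq]
    have hkeq : k = ((sseq (dseq r) (m+1)).dropLast).length + ℓ := by omega
    have hℓle : ℓ ≤ (vword (dseq r) m).length := by omega
    -- the remainder blocks
    set R := ((List.range n).map (fun j => vword (dseq r) (m + 1 + j))).flatten with hR
    -- F = f 0 ++ R
    have hF : ((List.range (n+1)).map f).flatten = f 0 ++ R := by
      rw [List.range_succ_eq_map, List.map_cons, List.flatten_cons, List.map_map]
      congr 1
      apply congrArg
      apply List.map_congr_left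
      intro j hj
      show f (j+1) = vword (dseq r) (m + 1 + j)
      rw [hf]
      simp only [Nat.succ_ne_zero, if_neg, if_false]
      rw [show m + (j+1) = m + 1 + j from by omega]
    -- D = big dropLast
    have hD : (sseq (dseq r) (m + n + 2)).dropLast
        = ((sseq (dseq r) (m+1)).dropLast ++ vword (dseq r) m) ++ R := by
      have h1 : (sseq (dseq r) (m + n + 2)).dropLast
          = ((List.range (m+1+n)).map (vword (dseq r))).flatten := by
        rw [show m+n+2 = m+1+n+1 from by omega]
        exact (flatten_vword r hr (m+1+n)).symm
      rw [h1, show m+1+n = (m+1) + n from rfl, List.range_add, List.map_append,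
          List.flatten_append, flatten_vword r hr (m+1), List.map_map, dropLast_step r hr m]
      rfl
    have hFD : ((List.range (n+1)).map f).flatten = ((sseq (dseq r) (m + n + 2)).dropLast).drop k := by
      rw [hF, hD, hkeq, List.append_assoc, List.drop_length_add_append,
          List.drop_append_of_le_length hℓle]
      congr 1
    rw [hFD]
    intro i hi
    have hDlen : ((sseq (dseq r) (m + n + 2)).dropLast).length = qseq (dseq r) (m + n + 1) - 1 := by
      rw [List.length_dropLast, length_sseq]
    have hki : k + i < ((sseq (dseq r) (m + n + 2)).dropLast).length := by
      rw [List.length_drop] at hi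
      omega
    rw [getD_drop' _ _ _ hki, getD_dropLast _ _ hki,
        shift_lemma r hr c hc m k ξ hξ i]
    exact hc (m + n + 1) (k + i) (by rw [length_sseq]; omega)
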